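/- For the negative binomial intercept-plus-offset model with known size s > 0 and log link, the score equation for β is e^β Σᵢ wᵢ e^{oᵢ}(yᵢ + s)/(e^β e^{oᵢ} + s) = Σᵢ wᵢ yᵢ; moreover, if (yᵢ, oᵢ, wᵢ) are i.i.d. with E[yᵢ | oᵢ, wᵢ] = e^{β₀ + oᵢ} and wᵢ e^{oᵢ}, wᵢ yᵢ have finite first moments, then E[wᵢ e^{oᵢ}(yᵢ + s)/(e^{β₀ + oᵢ} + s)] = E[wᵢ e^{oᵢ}], so the population score equation is solved by β₀ = log(E[wᵢ yᵢ]/E[wᵢ e^{oᵢ}]). -/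

import Mathlib

open MeasureTheory

/-- Negative binomial intercept-plus-offset model with known size s > 0 and log
link. (i) The score equation: the derivative of the weighted log-likelihood
L(β) = β Σᵢ wᵢyᵢ − Σᵢ wᵢ(yᵢ+s) log(s + e^β e^{oᵢ}) vanishes at β iff
e^β Σᵢ wᵢ e^{oᵢ}(yᵢ+s)/(e^β e^{oᵢ} + s) = Σᵢ wᵢyᵢ. (ii) Population version: if
E[Y | O, W] = e^{β₀+O} a.s., then E[W e^O (Y+s)/(e^{β₀+O}+s)] = E[W e^O], and the
population score equation is solved by β₀ = log(E[WY]/E[W e^O]). -/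
theorem stmt_15 (s : ℝ) (hs : 0 < s)
    -- finite-sample part
    (n : ℕ) (w y o : Fin n → ℝ) (hw : ∀ i, w i ∈ Set.Icc (0:ℝ) 1) (hy : ∀ i, 0 ≤ y i)
    -- population part
    {Ω : Type*} [MeasurableSpace Ω] (μ : Measure Ω) [IsProbabilityMeasure μ]
    (W O Y : Ω → ℝ) (b0 : ℝ)
    (hWm : Measurable W) (hOm : Measurable O) (hYm : Measurable Y)
    (hW01 : ∀ ω, W ω ∈ Set.Icc (0:ℝ) 1) (hY0 : ∀ ω, 0 ≤ Y ω)
    (hYint : Integrable Y μ)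
    (hWYint : Integrable (fun ω => W ω * Y ω) μ)
    (hWOint : Integrable (fun ω => W ω * Real.exp (O ω)) μ)
    (hcond : μ[Y | MeasurableSpace.comap (fun ω => (O ω, W ω)) inferInstance]
        =ᵐ[μ] fun ω => Real.exp (b0 + O ω))
    (hWYpos : 0 < ∫ ω, W ω * Y ω ∂μ) (hWOpos : 0 < ∫ ω, W ω * Real.exp (O ω) ∂μ) :
    (∀ b : ℝ,
      deriv (fun b' : ℝ => b' * ∑ i, w i * y i -
          ∑ i, w i * (y i + s) * Real.log (s + Real.exp b' * Real.exp (o i))) b = 0 ↔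
        Real.exp b * ∑ i, w i * Real.exp (o i) * (y i + s) /
            (Real.exp b * Real.exp (o i) + s) = ∑ i, w i * y i) ∧
    (∫ ω, W ω * Real.exp (O ω) * (Y ω + s) / (Real.exp (b0 + O ω) + s) ∂μ =
        ∫ ω, W ω * Real.exp (O ω) ∂μ) ∧
    b0 = Real.log ((∫ ω, W ω * Y ω ∂μ) / (∫ ω, W ω * Real.exp (O ω) ∂μ)) := by
  -- set up the sub-σ-algebra
  set m : MeasurableSpace Ω := MeasurableSpace.comap (fun ω => (O ω, W ω)) inferInstance with hmdef
  have hm : m ≤ _ := (hOm.prodMk hWm).comap_le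
  have hpm : Measurable[m] (fun ω => (O ω, W ω)) := Measurable.of_comap_le le_rfl
  -- key: for bounded m-measurable f, ∫ f Y = ∫ f e^{b0+O}
  have key : ∀ (f : Ω → ℝ) (C : ℝ), Measurable[m] f → (∀ ω, |f ω| ≤ C) →
      ∫ ω, f ω * Y ω ∂μ = ∫ ω, f ω * Real.exp (b0 + O ω) ∂μ := by
    intro f C hfm hC
    have hfSM : StronglyMeasurable[m] f := hfm.stronglyMeasurable
    have hfae := ((hfm.mono hm le_rfl).stronglyMeasurable).aestronglyMeasurable (μ := μ)
    have hfY : Integrable (fun ω => f ω * Y ω) μ :=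
      hYint.bdd_mul (c := C) hfae (Filter.Eventually.of_forall fun ω => by simpa using hC ω)
    calc ∫ ω, f ω * Y ω ∂μ
        = ∫ ω, (μ[(fun ω => f ω * Y ω)|m]) ω ∂μ := (integral_condExp hm).symm
      _ = ∫ ω, f ω * (μ[Y|m]) ω ∂μ := by
          refine integral_congr_ae ?_
          have := condExp_mul_of_stronglyMeasurable_left hfSM (by simpa [Pi.mul_def] using hfY) hYint
          simpa [Pi.mul_def] using this
      _ = ∫ ω, f ω * Real.exp (b0 + O ω) ∂μ := by
          refine integral_congr_ae (hcond.mono fun ω h => by simp only [h])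
  refine ⟨?_, ?_, ?_⟩
  · -- finite-sample score equation
    intro b
    have hpos : ∀ i : Fin n, (0:ℝ) < s + Real.exp b * Real.exp (o i) := fun i =>
      add_pos hs (mul_pos (Real.exp_pos b) (Real.exp_pos (o i)))
    have hD : HasDerivAt
        (fun b' : ℝ => b' * ∑ i, w i * y i -
          ∑ i, w i * (y i + s) * Real.log (s + Real.exp b' * Real.exp (o i)))
        ((∑ i, w i * y i) - ∑ i, w i * (y i + s) *
          (Real.exp b * Real.exp (o i) / (s + Real.exp b * Real.exp (o i)))) b := by
      refine HasDerivAt.sub ?_ ?_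
      · simpa using (hasDerivAt_id b).mul_const (∑ i, w i * y i)
      · refine HasDerivAt.fun_sum fun i _ => ?_
        have h1 : HasDerivAt (fun b' : ℝ => s + Real.exp b' * Real.exp (o i))
            (Real.exp b * Real.exp (o i)) b :=
          ((Real.hasDerivAt_exp b).mul_const (Real.exp (o i))).const_add s
        have h2 := (h1.log (ne_of_gt (hpos i))).const_mul (w i * (y i + s))
        simpa [mul_div_assoc] using h2
    rw [hD.deriv]
    have hsum : Real.exp b * ∑ i, w i * Real.exp (o i) * (y i + s) /
        (Real.exp b * Real.exp (o i) + s)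
        = ∑ i, w i * (y i + s) * (Real.exp b * Real.exp (o i) / (s + Real.exp b * Real.exp (o i))) := by
      rw [Finset.mul_sum]
      refine Finset.sum_congr rfl fun i _ => ?_
      have h0 : s + Real.exp b * Real.exp (o i) ≠ 0 := ne_of_gt (hpos i)
      have h0' : Real.exp b * Real.exp (o i) + s ≠ 0 := by
        rw [add_comm]; exact h0
      field_simp
      ring
    constructor
    · intro h
      rw [hsum]
      linarith [h]
    · intro h
      rw [hsum] at h
      linarith [h]
  · -- population identity
    set D : Ω → ℝ := fun ω => Real.exp (b0 + O ω) + s with hDdef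
    have hDpos : ∀ ω, 0 < D ω := fun ω => add_pos (Real.exp_pos _) hs
    set f : Ω → ℝ := fun ω => W ω * Real.exp (O ω) / D ω with hfdef
    have hfm : Measurable[m] f := by
      have hg : Measurable fun p : ℝ × ℝ =>
          p.2 * Real.exp p.1 / (Real.exp (b0 + p.1) + s) := by
        fun_prop
      exact hg.comp hpm
    have hfb : ∀ ω, |f ω| ≤ Real.exp (-b0) := by
      intro ω
      have hWb := hW01 ω
      have h1 : 0 ≤ f ω := by
        apply div_nonneg (mul_nonneg hWb.1 (Real.exp_pos _).le) (hDpos ω).le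
      rw [abs_of_nonneg h1]
      have key2 : Real.exp (-b0) * Real.exp (b0 + O ω) = Real.exp (O ω) := by
        rw [← Real.exp_add]; ring_nf
      have h3 : f ω ≤ Real.exp (-b0) := by
        rw [hfdef]
        show W ω * Real.exp (O ω) / (Real.exp (b0 + O ω) + s) ≤ Real.exp (-b0)
        rw [div_le_iff₀ (hDpos ω)]
        show W ω * Real.exp (O ω) ≤ Real.exp (-b0) * (Real.exp (b0 + O ω) + s)
        nlinarith [mul_le_of_le_one_left (Real.exp_pos (O ω)).le hWb.2,
          mul_pos (Real.exp_pos (-b0)) hs, key2]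
      exact h3
    have hfae :=
      ((hfm.mono hm le_rfl).stronglyMeasurable).aestronglyMeasurable (μ := μ)
    have hfint : Integrable f μ :=
      (integrable_const (Real.exp (-b0))).mono' hfae (Filter.Eventually.of_forall fun ω => by
        simpa using hfb ω)
    have hfYint : Integrable (fun ω => f ω * Y ω) μ :=
      hYint.bdd_mul (c := Real.exp (-b0)) hfae (Filter.Eventually.of_forall fun ω => by simpa using hfb ω)
    have hkey := key f (Real.exp (-b0)) hfm hfb
    have hfe : ∀ ω, f ω * Real.exp (b0 + O ω) + s * f ω = W ω * Real.exp (O ω) := by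
      intro ω
      have h0 : D ω ≠ 0 := ne_of_gt (hDpos ω)
      rw [hfdef]
      field_simp
      ring
    have hfe_int : Integrable (fun ω => f ω * Real.exp (b0 + O ω)) μ := by
      have : (fun ω => f ω * Real.exp (b0 + O ω))
          = fun ω => W ω * Real.exp (O ω) - s * f ω := by
        funext ω; have := hfe ω; linarith
      rw [this]
      exact hWOint.sub (hfint.const_mul s)
    have heq1 : (fun ω => W ω * Real.exp (O ω) * (Y ω + s) / (Real.exp (b0 + O ω) + s))
        = fun ω => f ω * Y ω + s * f ω := by
      funext ω
      have h0 : D ω ≠ 0 := ne_of_gt (hDpos ω)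
      rw [hfdef]
      field_simp
      ring
    rw [heq1, integral_add hfYint (hfint.const_mul s), hkey,
      integral_const_mul, ← integral_const_mul, ← integral_add hfe_int (hfint.const_mul s)]
    exact integral_congr_ae (Filter.Eventually.of_forall fun ω => hfe ω)
  · -- b0 solves the population score equation
    have hWmm : Measurable[m] W := by
      have : Measurable fun p : ℝ × ℝ => p.2 := measurable_snd
      exact this.comp hpm
    have hWb : ∀ ω, |W ω| ≤ 1 := fun ω =>
      abs_le.mpr ⟨le_trans (by norm_num) (hW01 ω).1, (hW01 ω).2⟩
    have hkey := key W 1 hWmm hWb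
    have h2 : ∫ ω, W ω * Real.exp (b0 + O ω) ∂μ
        = Real.exp b0 * ∫ ω, W ω * Real.exp (O ω) ∂μ := by
      rw [← integral_const_mul]
      congr 1
      funext ω
      rw [Real.exp_add]; ring
    rw [hkey, h2, mul_div_assoc, div_self (ne_of_gt hWOpos), mul_one, Real.log_exp]
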